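/- A right R-module M is max-projective if and only if for every epimorphism f : N → S with S a simple right R-module and every homomorphism g : M → S, there exists a homomorphism h : M → N with fh = g. -/
import Mathlib


universe u v

/-- A module `M` is *max-projective* if every homomorphism `M → R/I`, for `I` a
maximal right ideal of `R`, factors through the canonical projection `R → R/I`. -/
def MaxProjective (R : Type u) [Ring R] (M : Type v) [AddCommGroup M] [Module R M] : Prop :=
  ∀ I : Submodule R R, IsCoatom I → ∀ g : M →ₗ[R] R ⧸ I,
    ∃ h : M →ₗ[R] R, I.mkQ.comp h = g

/-- `M` is max-projective iff every homomorphism from `M` to a simple module `S`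
lifts along every epimorphism onto `S`. -/
theorem maxProjective_iff_lifts_to_simple (R : Type u) [Ring R]
    (M : Type u) [AddCommGroup M] [Module R M] :
    MaxProjective R M ↔
      ∀ (N S : Type u) [AddCommGroup N] [Module R N] [AddCommGroup S] [Module R S],
        IsSimpleModule R S → ∀ f : N →ₗ[R] S, Function.Surjective f →
          ∀ g : M →ₗ[R] S, ∃ h : M →ₗ[R] N, f.comp h = g := by
  constructor
  · intro hM N S _ _ _ _ hS f hf g
    have := hS.nontrivial
    obtain ⟨s, hs⟩ := exists_ne (0 : S)
    set φ := LinearMap.toSpanSingleton R S s with hφ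
    have hφsurj : Function.Surjective φ := IsSimpleModule.toSpanSingleton_surjective R hs
    set I := LinearMap.ker φ with hI
    have hcoatom : IsCoatom I := by
      rw [← isSimpleModule_iff_isCoatom]
      exact IsSimpleModule.congr (φ.quotKerEquivOfSurjective hφsurj)
    set e : (R ⧸ I) ≃ₗ[R] S := φ.quotKerEquivOfSurjective hφsurj with he
    have he' : ∀ r : R, e (I.mkQ r) = φ r := fun r => rfl
    obtain ⟨h, hh⟩ := hM I hcoatom ((e.symm : S →ₗ[R] R ⧸ I).comp g)
    obtain ⟨n, hn⟩ := hf s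
    refine ⟨(LinearMap.toSpanSingleton R N n).comp h, ?_⟩
    ext m
    have : I.mkQ (h m) = e.symm (g m) := LinearMap.congr_fun hh m
    have h2 : φ (h m) = g m := by
      rw [← he' (h m), this, e.apply_symm_apply]
    simp only [LinearMap.comp_apply, LinearMap.toSpanSingleton_apply, map_smul]
    rw [hn, ← h2]
    rfl
  · intro H I hI g
    have : IsSimpleModule R (R ⧸ I) := isSimpleModule_iff_isCoatom.mpr hI
    exact H R (R ⧸ I) this I.mkQ (Submodule.Quotient.mk_surjective I) g
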